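/- Let X be a random variable with distribution μ_X on a measure space (X,𝒳,μ), where μ(X) < ∞, μ_X ≪ μ, and the generalized entropy h_μ(X) := −∫ log(dμ_X/dμ) dμ_X is finite. Let (Y,𝒴) be a measurable space, ρ : X × Y → [0,∞] a measurable distortion function, and k > 0, m > 0, δ₀ ∈ (0,∞), c > 0 with c < μ(X) δ₀^{−m}. Suppose μ(B_{ρ^{1/k}}(y,δ)) ≤ c δ^m for all y ∈ Y and all δ ∈ (0,δ₀). Then for every D > 0, h_μ(X) − inf_{s ≥ 0} ( s·D + log ν(s) ) ≥ h_μ(X) − inf_{s > 0} q(s,D), where ν(s) := sup_{y∈Y} ∫ e^{−s ρ(x,y)} dμ(x), q(s,D) := s δ₀^{−k} D + p(s), and p(s) := log( ( μ(X) Γ(m/k+1) − (μ(X) − δ₀^m c) γ(m/k+1, s) ) / s^{m/k} ). -/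

import Mathlib

open MeasureTheory Real Set
open scoped ENNReal NNReal

/-- `expNeg u = e^{-u}` for `u ∈ [0,∞]`, with `e^{-∞} = 0`. -/
noncomputable def expNeg (u : ℝ≥0∞) : ℝ≥0∞ :=
  if u = ⊤ then 0 else ENNReal.ofReal (Real.exp (-u.toReal))

/-- The lower incomplete gamma function `γ(a,s) = ∫₀^s t^{a-1} e^{-t} dt`. -/
noncomputable def lowerGamma (a s : ℝ) : ℝ :=
  ∫ t in (0:ℝ)..s, t ^ (a - 1) * Real.exp (-t)

lemma expIoi (A : ℝ) (hA : 0 < A) (b : ℝ) :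
    ∫⁻ u in Ioi b, ENNReal.ofReal (A * Real.exp (-(A*u))) = ENNReal.ofReal (Real.exp (-(A*b))) := by
  have hint : IntegrableOn (fun u => A * Real.exp (-(A*u))) (Ioi b) := by
    have := (exp_neg_integrableOn_Ioi b hA).const_mul A
    simp only [neg_mul] at this; exact this
  rw [← ofReal_integral_eq_lintegral_ofReal hint]
  · congr 1
    have h2 : ∫ u in Ioi b, Real.exp (-(A*u)) = A⁻¹ • Real.exp (-(A*b)) := by
      have := integral_comp_mul_left_Ioi (fun x => Real.exp (-x)) b hA
      rw [this, integral_exp_neg_Ioi]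
    have h3 : ∫ x in Ioi b, A * Real.exp (-(A*x)) = A * ∫ x in Ioi b, Real.exp (-(A*x)) := by
      rw [← smul_eq_mul, ← integral_smul]
      simp [smul_eq_mul]
    rw [h3, h2]
    field_simp
    rw [smul_eq_mul, ← mul_assoc, mul_one_div_cancel hA.ne', one_mul]
  · filter_upwards with u
    positivity

lemma layer (A : ℝ) (hA : 0 < A) (r : ℝ≥0∞) :
    ∫⁻ u in Ioi (0:ℝ),
      (if r < ENNReal.ofReal u then ENNReal.ofReal (A * Real.exp (-(A*u))) else 0)
      = expNeg (ENNReal.ofReal A * r) := by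
  by_cases hr : r = ⊤
  · subst hr
    have h1 : ENNReal.ofReal A * ⊤ = ⊤ := by
      rw [ENNReal.mul_top]
      exact (ENNReal.ofReal_pos.mpr hA).ne'
    simp [h1, expNeg, not_top_lt]
  · have ht : 0 ≤ r.toReal := ENNReal.toReal_nonneg
    have hiff : ∀ u : ℝ, (r < ENNReal.ofReal u) ↔ r.toReal < u :=
      fun u => ENNReal.lt_ofReal_iff_toReal_lt hr
    have h1 : (fun u : ℝ => if r < ENNReal.ofReal u then ENNReal.ofReal (A * Real.exp (-(A*u))) else 0)
        = (Ioi r.toReal).indicator (fun u => ENNReal.ofReal (A * Real.exp (-(A*u)))) := by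
      ext u; simp [Set.indicator_apply, mem_Ioi, hiff u]
    rw [h1, lintegral_indicator measurableSet_Ioi, Measure.restrict_restrict measurableSet_Ioi,
      Ioi_inter_Ioi, max_eq_left ht, expIoi A hA]
    have hne : ENNReal.ofReal A * r ≠ ⊤ := ENNReal.mul_ne_top ENNReal.ofReal_ne_top hr
    rw [expNeg, if_neg hne, ENNReal.toReal_mul, ENNReal.toReal_ofReal hA.le]

lemma tonelli {X : Type*} [MeasurableSpace X] (μ : Measure X) [SFinite μ]
    (f : X → ℝ≥0∞) (hf : Measurable f) (A : ℝ) (hA : 0 < A) :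
    ∫⁻ x, expNeg (ENNReal.ofReal A * f x) ∂μ
      = ∫⁻ u in Ioi (0:ℝ), μ {x | f x < ENNReal.ofReal u} * ENNReal.ofReal (A * Real.exp (-(A*u))) := by
  have hg : Measurable fun u : ℝ => ENNReal.ofReal (A * Real.exp (-(A*u))) := by
    apply Measurable.ennreal_ofReal; fun_prop
  have h1 : ∀ x, expNeg (ENNReal.ofReal A * f x)
      = ∫⁻ u in Ioi (0:ℝ), (if f x < ENNReal.ofReal u then ENNReal.ofReal (A * Real.exp (-(A*u))) else 0) :=
    fun x => (layer A hA (f x)).symm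
  simp_rw [h1]
  rw [lintegral_lintegral_swap]
  · apply setLIntegral_congr_fun measurableSet_Ioi
    intro u _
    have hms : MeasurableSet {x | f x < ENNReal.ofReal u} := measurableSet_lt hf measurable_const
    have h2 : (fun x => if f x < ENNReal.ofReal u then ENNReal.ofReal (A * Real.exp (-(A*u))) else 0)
        = {x | f x < ENNReal.ofReal u}.indicator (fun _ => ENNReal.ofReal (A * Real.exp (-(A*u)))) := by
      ext x; simp [Set.indicator_apply]
    calc ∫⁻ x, (if f x < ENNReal.ofReal u then ENNReal.ofReal (A * Real.exp (-(A*u))) else 0) ∂μ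
        = ENNReal.ofReal (A * Real.exp (-(A*u))) * μ {x | f x < ENNReal.ofReal u} := by
          rw [h2, lintegral_indicator_const hms]
      _ = _ := mul_comm _ _
  · apply Measurable.aemeasurable
    have : Function.uncurry (fun x u => (if f x < ENNReal.ofReal u then ENNReal.ofReal (A * Real.exp (-(A*u))) else 0))
        = fun p : X × ℝ => (if f p.1 < ENNReal.ofReal p.2 then ENNReal.ofReal (A * Real.exp (-(A*p.2))) else 0) := rfl
    rw [this]
    exact Measurable.ite
      (measurableSet_lt (hf.comp measurable_fst) (ENNReal.measurable_ofReal.comp measurable_snd))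
      (hg.comp measurable_snd) measurable_const

lemma subst_calc (a A T : ℝ) (hA : 0 < A) (hT : 0 ≤ T) :
    ∫ u in (0:ℝ)..T, u ^ a * (A * Real.exp (-(A*u)))
      = A ^ (-a) * ∫ t in (0:ℝ)..(A*T), t ^ a * Real.exp (-t) := by
  have h := intervalIntegral.smul_integral_comp_mul_left (a := 0) (b := T)
    (fun t => t ^ a * Real.exp (-t)) A
  simp only [mul_zero, smul_eq_mul] at h
  have h2 : ∫ u in (0:ℝ)..T, (A*u)^a * Real.exp (-(A*u))
      = A^a * ∫ u in (0:ℝ)..T, u^a * Real.exp (-(A*u)) := by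
    rw [← intervalIntegral.integral_const_mul]
    apply intervalIntegral.integral_congr
    intro u hu
    rw [Set.uIcc_of_le hT] at hu
    show (A*u)^a * Real.exp (-(A*u)) = A^a * (u^a * Real.exp (-(A*u)))
    rw [Real.mul_rpow hA.le hu.1]
    ring
  rw [h2] at h
  have h3 : ∫ u in (0:ℝ)..T, u^a * (A * Real.exp (-(A*u)))
      = A * ∫ u in (0:ℝ)..T, u^a * Real.exp (-(A*u)) := by
    rw [← intervalIntegral.integral_const_mul]
    congr 1; ext u; ring
  rw [h3, ← h, Real.rpow_neg hA.le]
  have hAa : A ^ a ≠ 0 := (Real.rpow_pos_of_pos hA a).ne'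
  field_simp

lemma keybound {X : Type*} [MeasurableSpace X] (μ : Measure X) [IsFiniteMeasure μ]
    (f : X → ℝ≥0∞) (hf : Measurable f)
    (k m δ₀ c s : ℝ) (hk : 0 < k) (hm : 0 < m) (hδ₀ : 0 < δ₀) (hc : 0 < c) (hs : 0 < s)
    (hsub : ∀ δ : ℝ, 0 < δ → δ < δ₀ →
      μ {x | f x < ENNReal.ofReal (δ ^ k)} ≤ ENNReal.ofReal (c * δ ^ m)) :
    ∫⁻ x, expNeg (ENNReal.ofReal (s * δ₀ ^ (-k)) * f x) ∂μ
      ≤ ENNReal.ofReal (c * δ₀ ^ m * (∫ t in (0:ℝ)..s, t ^ (m/k) * Real.exp (-t)) / s ^ (m/k)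
          + (μ Set.univ).toReal * Real.exp (-s)) := by
  set a := m / k with ha_def
  have ha : 0 < a := div_pos hm hk
  set A := s * δ₀ ^ (-k) with hA_def
  have hA : 0 < A := mul_pos hs (Real.rpow_pos_of_pos hδ₀ _)
  set T := δ₀ ^ k with hT_def
  have hT : 0 < T := Real.rpow_pos_of_pos hδ₀ _
  have hAT : A * T = s := by
    rw [hA_def, hT_def, mul_assoc, ← Real.rpow_add hδ₀, neg_add_cancel, Real.rpow_zero, mul_one]
  have hg : Measurable fun u : ℝ => ENNReal.ofReal (A * Real.exp (-(A*u))) :=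
    Measurable.ennreal_ofReal (by fun_prop)
  rw [tonelli μ f hf A hA]
  set γ' := ∫ t in (0:ℝ)..s, t ^ a * Real.exp (-t) with hγ'
  have hγ'nn : 0 ≤ γ' :=
    intervalIntegral.integral_nonneg hs.le
      (fun t ht => mul_nonneg (Real.rpow_nonneg ht.1 a) (Real.exp_pos _).le)
  set B : ℝ → ℝ≥0∞ := fun u => if u < T then ENNReal.ofReal (c * u ^ a) else μ Set.univ with hB
  have hBmeas : Measurable fun u => B u * ENNReal.ofReal (A * Real.exp (-(A*u))) := by
    apply Measurable.mul _ hg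
    exact Measurable.ite measurableSet_Iio
      ((continuous_const.mul (Real.continuous_rpow_const ha.le)).measurable.ennreal_ofReal)
      measurable_const
  have hbound : ∫⁻ u in Ioi (0:ℝ), μ {x | f x < ENNReal.ofReal u} * ENNReal.ofReal (A * Real.exp (-(A*u)))
      ≤ ∫⁻ u in Ioi (0:ℝ), B u * ENNReal.ofReal (A * Real.exp (-(A*u))) := by
    apply setLIntegral_mono hBmeas
    intro u hu
    apply mul_le_mul_left
    by_cases huT : u < T
    · rw [hB]; simp only [if_pos huT]
      have hu0 : 0 < u := hu
      set δ := u ^ (1/k) with hδ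
      have hδpos : 0 < δ := Real.rpow_pos_of_pos hu0 _
      have hδlt : δ < δ₀ := by
        have h1 : u ^ (1/k) < (δ₀ ^ k) ^ (1/k) := Real.rpow_lt_rpow hu0.le huT (by positivity)
        have h2 : (δ₀ ^ k) ^ (1/k) = δ₀ := by
          rw [← Real.rpow_mul hδ₀.le, mul_one_div, div_self hk.ne', Real.rpow_one]
        rw [hδ]; rw [h2] at h1; exact h1
      have hδk : δ ^ k = u := by
        rw [hδ, ← Real.rpow_mul hu0.le, one_div, inv_mul_cancel₀ hk.ne', Real.rpow_one]
      have hδm : δ ^ m = u ^ a := by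
        rw [hδ, ← Real.rpow_mul hu0.le]
        congr 1
        rw [ha_def]; ring
      have := hsub δ hδpos hδlt
      rwa [hδk, hδm] at this
    · rw [hB]; simp only [if_neg huT]; exact measure_mono (subset_univ _)
  refine le_trans hbound (le_of_eq ?_)
  have hsplit : Ioi (0:ℝ) = Ioo 0 T ∪ Ici T := (Ioo_union_Ici_eq_Ioi hT).symm
  have hdisj : Disjoint (Ioo (0:ℝ) T) (Ici T) := by
    rw [Set.disjoint_left]; rintro x ⟨_, h2⟩ h3; exact absurd h3 (not_le.mpr h2)
  rw [hsplit, lintegral_union measurableSet_Ici hdisj]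
  have hpiece2 : ∫⁻ u in Ici T, B u * ENNReal.ofReal (A * Real.exp (-(A*u)))
      = ENNReal.ofReal ((μ Set.univ).toReal * Real.exp (-s)) := by
    have h1 : ∫⁻ u in Ici T, B u * ENNReal.ofReal (A * Real.exp (-(A*u)))
        = ∫⁻ u in Ici T, μ Set.univ * ENNReal.ofReal (A * Real.exp (-(A*u))) := by
      apply setLIntegral_congr_fun measurableSet_Ici
      intro u hu
      rw [hB]; simp only [if_neg (not_lt.mpr (mem_Ici.mp hu))]
    rw [h1, ← Measure.restrict_congr_set Ioi_ae_eq_Ici, lintegral_const_mul _ hg, expIoi A hA,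
      ← ENNReal.ofReal_toReal (measure_ne_top μ Set.univ),
      ← ENNReal.ofReal_mul ENNReal.toReal_nonneg, hAT,
      ENNReal.toReal_ofReal ENNReal.toReal_nonneg]
  have hpiece1 : ∫⁻ u in Ioo 0 T, B u * ENNReal.ofReal (A * Real.exp (-(A*u)))
      = ENNReal.ofReal (c * δ₀ ^ m * γ' / s ^ a) := by
    have h1 : ∫⁻ u in Ioo 0 T, B u * ENNReal.ofReal (A * Real.exp (-(A*u)))
        = ∫⁻ u in Ioo 0 T, ENNReal.ofReal (c * u ^ a * (A * Real.exp (-(A*u)))) := by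
      apply setLIntegral_congr_fun measurableSet_Ioo
      intro u hu
      rw [hB]; simp only [if_pos hu.2]
      rw [← ENNReal.ofReal_mul (mul_nonneg hc.le (Real.rpow_nonneg hu.1.le a))]
    rw [h1]
    have hcont : Continuous fun u : ℝ => c * u ^ a * (A * Real.exp (-(A*u))) := by
      apply Continuous.mul
      · exact continuous_const.mul (Real.continuous_rpow_const ha.le)
      · fun_prop
    have hint : IntegrableOn (fun u : ℝ => c * u ^ a * (A * Real.exp (-(A*u)))) (Ioo 0 T) :=
      (hcont.integrableOn_Icc (a := 0) (b := T)).mono_set Ioo_subset_Icc_self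
    rw [← ofReal_integral_eq_lintegral_ofReal hint ?_]
    swap
    · filter_upwards [ae_restrict_mem measurableSet_Ioo] with u hu
      exact mul_nonneg (mul_nonneg hc.le (Real.rpow_nonneg hu.1.le a))
        (mul_nonneg hA.le (Real.exp_pos _).le)
    congr 1
    have h2 : ∫ u in Ioo (0:ℝ) T, c * u ^ a * (A * Real.exp (-(A*u)))
        = ∫ u in (0:ℝ)..T, c * u ^ a * (A * Real.exp (-(A*u))) := by
      rw [intervalIntegral.integral_of_le hT.le, integral_Ioc_eq_integral_Ioo]
    have h3 : ∫ u in (0:ℝ)..T, c * u ^ a * (A * Real.exp (-(A*u)))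
        = c * ∫ u in (0:ℝ)..T, u ^ a * (A * Real.exp (-(A*u))) := by
      rw [← intervalIntegral.integral_const_mul]
      congr 1; ext u; ring
    rw [h2, h3, subst_calc a A T hA hT.le, hAT]
    have hAa : A ^ (-a) = δ₀ ^ m / s ^ a := by
      rw [hA_def, Real.mul_rpow hs.le (Real.rpow_pos_of_pos hδ₀ _).le,
        ← Real.rpow_mul hδ₀.le]
      have : -k * -a = m := by rw [ha_def]; field_simp
      rw [this, Real.rpow_neg hs.le]
      ring
    rw [hAa, ← hγ']
    ring
  rw [hpiece1, hpiece2,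
    ← ENNReal.ofReal_add
      (div_nonneg (mul_nonneg (mul_nonneg hc.le (Real.rpow_pos_of_pos hδ₀ m).le) hγ'nn)
        (Real.rpow_nonneg hs.le a))
      (mul_nonneg ENNReal.toReal_nonneg (Real.exp_pos _).le)]

lemma gamma_tail (a s : ℝ) (ha : 0 < a) (hs : 0 < s) :
    s ^ a * Real.exp (-s) + (∫ t in (0:ℝ)..s, t ^ a * Real.exp (-t)) ≤ Real.Gamma (a + 1) := by
  have ha1 : (0:ℝ) < a + 1 := by linarith
  have hG : Real.Gamma (a+1) = ∫ x in Ioi (0:ℝ), Real.exp (-x) * x ^ a := by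
    rw [Real.Gamma_eq_integral ha1, add_sub_cancel_right]
  have hconv : IntegrableOn (fun x => Real.exp (-x) * x ^ a) (Ioi (0:ℝ)) := by
    have := Real.GammaIntegral_convergent ha1
    rwa [add_sub_cancel_right] at this
  have hunion : Ioc (0:ℝ) s ∪ Ioi s = Ioi 0 := Ioc_union_Ioi_eq_Ioi hs.le
  have hdisj : Disjoint (Ioc (0:ℝ) s) (Ioi s) := by
    rw [Set.disjoint_left]; rintro x ⟨_, h2⟩ h3; exact absurd (mem_Ioi.mp h3) (not_lt.mpr h2)
  have hsplit : ∫ x in Ioi (0:ℝ), Real.exp (-x) * x ^ a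
      = (∫ x in Ioc (0:ℝ) s, Real.exp (-x) * x ^ a) + ∫ x in Ioi s, Real.exp (-x) * x ^ a := by
    rw [← hunion, setIntegral_union hdisj measurableSet_Ioi
      (hconv.mono_set (by rw [← hunion]; exact subset_union_left))
      (hconv.mono_set (by rw [← hunion]; exact subset_union_right))]
  have hIoc : ∫ x in Ioc (0:ℝ) s, Real.exp (-x) * x ^ a
      = ∫ t in (0:ℝ)..s, t ^ a * Real.exp (-t) := by
    rw [intervalIntegral.integral_of_le hs.le]
    congr 1; ext t; ring
  have e1 : IntegrableOn (fun t => Real.exp (-t)) (Ioi s) := by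
    simpa using exp_neg_integrableOn_Ioi s one_pos
  have htail : Real.exp (-s) * s ^ a ≤ ∫ x in Ioi s, Real.exp (-x) * x ^ a := by
    have h1 : ∫ x in Ioi s, Real.exp (-x) * s ^ a ≤ ∫ x in Ioi s, Real.exp (-x) * x ^ a := by
      apply setIntegral_mono_on (e1.mul_const _)
        (hconv.mono_set (Ioi_subset_Ioi hs.le)) measurableSet_Ioi
      intro t ht
      exact mul_le_mul_of_nonneg_left
        (Real.rpow_le_rpow hs.le (le_of_lt (mem_Ioi.mp ht)) ha.le) (Real.exp_pos _).le
    have h2 : ∫ x in Ioi s, Real.exp (-x) * s ^ a = Real.exp (-s) * s ^ a := by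
      rw [MeasureTheory.integral_mul_const, integral_exp_neg_Ioi]
    linarith
  rw [hG, hsplit, hIoc]
  nlinarith [htail]

lemma sum_le_num (a δm c s M γ' Γ : ℝ) (hs : 0 < s) (hM : 0 ≤ M)
    (htail : s ^ a * Real.exp (-s) + γ' ≤ Γ) :
    c * δm * γ' / s ^ a + M * Real.exp (-s) ≤ (M * Γ - (M - δm * c) * γ') / s ^ a := by
  have hsa : 0 < s ^ a := Real.rpow_pos_of_pos hs a
  have key : (M * Γ - (M - δm * c) * γ') / s ^ a - (c * δm * γ' / s ^ a + M * Real.exp (-s))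
      = M * (Γ - (s ^ a * Real.exp (-s) + γ')) / s ^ a := by
    field_simp
    ring
  have hnn : 0 ≤ M * (Γ - (s ^ a * Real.exp (-s) + γ')) / s ^ a :=
    div_nonneg (mul_nonneg hM (by linarith)) hsa.le
  linarith

lemma num_pos (a δm c s M γ' Γ : ℝ) (ha : 0 < a) (hs : 0 < s) (hδm : 0 < δm) (hc : 0 < c)
    (hM : 0 < M) (hγnn : 0 ≤ γ') (htail : s ^ a * Real.exp (-s) + γ' ≤ Γ) :
    0 < (M * Γ - (M - δm * c) * γ') / s ^ a := by
  have hsa : 0 < s ^ a := Real.rpow_pos_of_pos hs a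
  apply div_pos _ hsa
  nlinarith [mul_le_mul_of_nonneg_left htail hM.le,
    mul_pos hM (mul_pos hsa (Real.exp_pos (-s))),
    mul_nonneg (mul_nonneg hδm.le hc.le) hγnn]

/-- In the regime `c < μ(X) δ₀^{-m}`, the Shannon lower bound
`h − inf_{s ≥ 0}(sD + log ν(s))` is bounded below by `h − inf_{s > 0} q(s,D)`, where
`q(s,D) = s δ₀^{-k} D + p(s)` and
`p(s) = log((μ(X) Γ(m/k+1) − (μ(X) − δ₀^m c) γ(m/k+1,s)) / s^{m/k})`. -/
theorem stmt7
    {X Y : Type*} [MeasurableSpace X] [MeasurableSpace Y]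
    (μ : Measure X) (hμfin : μ Set.univ < ⊤)
    (μX : Measure X) [IsProbabilityMeasure μX] (hac : μX ≪ μ)
    (h : ℝ)
    (hint : Integrable (fun x => Real.log (μX.rnDeriv μ x).toReal) μX)
    (hh : h = -∫ x, Real.log (μX.rnDeriv μ x).toReal ∂μX)
    (ρ : X → Y → ℝ≥0∞) (hρ : Measurable (fun p : X × Y => ρ p.1 p.2))
    (k m δ₀ c : ℝ) (hk : 0 < k) (hm : 0 < m) (hδ₀ : 0 < δ₀) (hc : 0 < c)
    (hcsmall : c < (μ Set.univ).toReal * δ₀ ^ (-m))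
    (hsub : ∀ y : Y, ∀ δ : ℝ, 0 < δ → δ < δ₀ →
      μ {x | ρ x y < ENNReal.ofReal (δ ^ k)} ≤ ENNReal.ofReal (c * δ ^ m))
    (ν : ℝ → ℝ≥0∞)
    (hν : ∀ s : ℝ, ν s = ⨆ y : Y, ∫⁻ x, expNeg (ENNReal.ofReal s * ρ x y) ∂μ)
    (p : ℝ → ℝ)
    (hp : ∀ s : ℝ, p s =
      Real.log (((μ Set.univ).toReal * Real.Gamma (m / k + 1)
        - ((μ Set.univ).toReal - δ₀ ^ m * c) * lowerGamma (m / k + 1) s) / s ^ (m / k))) :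
    ∀ D : ℝ, 0 < D →
      (h : EReal) - ⨅ s : {s : ℝ // 0 ≤ s}, (((s : ℝ) * D : ℝ) : EReal) + ENNReal.log (ν s) ≥
        (h : EReal) - ⨅ s : {s : ℝ // 0 < s}, (((s : ℝ) * δ₀ ^ (-k) * D + p s : ℝ) : EReal) := by
  intro D hD
  haveI : IsFiniteMeasure μ := ⟨hμfin⟩
  apply EReal.sub_le_sub le_rfl
  apply le_iInf
  rintro ⟨s, hs⟩
  have hA : 0 < s * δ₀ ^ (-k) := mul_pos hs (Real.rpow_pos_of_pos hδ₀ _)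
  refine iInf_le_of_le ⟨s * δ₀ ^ (-k), hA.le⟩ ?_
  show ((s * δ₀ ^ (-k) * D : ℝ) : EReal) + ENNReal.log (ν (s * δ₀ ^ (-k)))
      ≤ ((s * δ₀ ^ (-k) * D + p s : ℝ) : EReal)
  rw [EReal.coe_add]
  apply add_le_add_right
  have ha : 0 < m / k := div_pos hm hk
  have hγeq : lowerGamma (m / k + 1) s = ∫ t in (0:ℝ)..s, t ^ (m / k) * Real.exp (-t) := by
    rw [lowerGamma, add_sub_cancel_right]
  set γ' := ∫ t in (0:ℝ)..s, t ^ (m / k) * Real.exp (-t) with hγdef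
  set M := (μ Set.univ).toReal with hMdef
  have hγnn : 0 ≤ γ' :=
    intervalIntegral.integral_nonneg hs.le
      (fun t ht => mul_nonneg (Real.rpow_nonneg ht.1 _) (Real.exp_pos _).le)
  have htail := gamma_tail (m / k) s ha hs
  rw [← hγdef] at htail
  have hMpos : 0 < M := by
    by_contra hcon
    push_neg at hcon
    nlinarith [Real.rpow_pos_of_pos hδ₀ (-m), hc, hcsmall]
  have hnum : 0 < (M * Real.Gamma (m / k + 1) - (M - δ₀ ^ m * c) * γ') / s ^ (m / k) :=
    num_pos (m / k) (δ₀ ^ m) c s M γ' (Real.Gamma (m / k + 1)) ha hs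
      (Real.rpow_pos_of_pos hδ₀ m) hc hMpos hγnn htail
  have hexp : Real.exp (p s)
      = (M * Real.Gamma (m / k + 1) - (M - δ₀ ^ m * c) * γ') / s ^ (m / k) := by
    rw [hp s, hγeq]
    exact Real.exp_log hnum
  have hνbound : ν (s * δ₀ ^ (-k)) ≤ ENNReal.ofReal (Real.exp (p s)) := by
    rw [hν, hexp]
    apply iSup_le
    intro y
    have hfy : Measurable fun x => ρ x y := hρ.comp (measurable_id.prodMk measurable_const)
    refine le_trans
      (keybound μ (fun x => ρ x y) hfy k m δ₀ c s hk hm hδ₀ hc hs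
        (fun δ h1 h2 => hsub y δ h1 h2)) ?_
    apply ENNReal.ofReal_le_ofReal
    rw [← hγdef, ← hMdef]
    exact sum_le_num (m / k) (δ₀ ^ m) c s M γ' (Real.Gamma (m / k + 1)) hs hMpos.le htail
  calc ENNReal.log (ν (s * δ₀ ^ (-k)))
      ≤ ENNReal.log (ENNReal.ofReal (Real.exp (p s))) := ENNReal.log_monotone hνbound
    _ ≤ ((p s : ℝ) : EReal) := by
        rw [ENNReal.log_ofReal, if_neg (not_le.mpr (Real.exp_pos _)), Real.log_exp]
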